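/- Let m ≥ 2 be odd, k > 3 with k | m, and let χ be a Dirichlet character modulo km with χ^m trivial. If m | (a1 + a2 + a3 + a4) and k | (a2 + 2a3 + 3a4), then Σ_{t=0}^{km−1} χ(t^{a1} (t+m)^{a2} (t+2m)^{a3} (t+3m)^{a4}) = k·φ(m). -/

import Mathlib

open Finset

private lemma totient_mul_aux : ∀ k : ℕ, ∀ m : ℕ,
    (∀ p : ℕ, p.Prime → p ∣ k → p ∣ m) → Nat.totient (k * m) = k * Nat.totient m := by
  intro k
  induction k using Nat.strong_induction_on with
  | _ k ih =>
    intro m hrad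
    rcases Nat.eq_zero_or_pos k with rfl | hk0
    · simp
    rcases Nat.eq_or_lt_of_le hk0 with h1 | h1
    · simp [← h1]
    have hk2 : 2 ≤ k := h1
    obtain ⟨p, hpp, hpk⟩ : ∃ p : ℕ, p.Prime ∧ p ∣ k :=
      ⟨k.minFac, Nat.minFac_prime (by omega), Nat.minFac_dvd k⟩
    have hpm : p ∣ m := hrad _ hpp hpk
    obtain ⟨c, hc⟩ := hpk
    have hp2 : 2 ≤ p := hpp.two_le
    have hc1 : 1 ≤ c := by
      rcases Nat.eq_zero_or_pos c with rfl | h; · omega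
      · exact h
    have hclt : c < k := by nlinarith
    have hstep : k * m = p * (c * m) := by rw [hc]; ring
    rw [hstep, Nat.totient_mul_of_prime_of_dvd hpp (hpm.mul_left c),
      ih c hclt m (fun q hq hqc => hrad q hq (hc ▸ hqc.mul_left p)), hc]
    ring

private lemma zmod_m_sq (k m : ℕ) (hkm : k ∣ m) :
    (m : ZMod (k * m)) * (m : ZMod (k * m)) = 0 := by
  obtain ⟨c, rfl⟩ := hkm
  have h : ((k * c) * (k * c) : ℕ) = (k * (k * c)) * c := by ring
  calc ((k * c : ℕ) : ZMod (k * (k * c))) * ((k * c : ℕ) : ZMod (k * (k * c)))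
      = (((k * c) * (k * c) : ℕ) : ZMod (k * (k * c))) := by push_cast; ring
    _ = (((k * (k * c)) * c : ℕ) : ZMod (k * (k * c))) := by rw [h]
    _ = 0 := by rw [Nat.cast_mul, ZMod.natCast_self, zero_mul]

theorem char_sum_main_term (m k : ℕ) (hm : 2 ≤ m) (hodd : Odd m) (hk : 3 < k)
    (hkm : k ∣ m) (χ : DirichletCharacter ℂ (k * m)) (hχ : χ ^ m = 1)
    (a1 a2 a3 a4 : ℤ) (hsum : (m : ℤ) ∣ (a1 + a2 + a3 + a4))
    (hsum' : (k : ℤ) ∣ (a2 + 2 * a3 + 3 * a4)) :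
    ∑ t ∈ Finset.range (k * m),
      (χ ^ a1) (t : ZMod (k * m)) * (χ ^ a2) ((t : ZMod (k * m)) + (m : ZMod (k * m))) *
      (χ ^ a3) ((t : ZMod (k * m)) + 2 * (m : ZMod (k * m))) *
      (χ ^ a4) ((t : ZMod (k * m)) + 3 * (m : ZMod (k * m)))
      = (k : ℂ) * (Nat.totient m : ℂ) := by
  have hNpos : 0 < k * m := by positivity
  haveI : NeZero (k * m) := ⟨hNpos.ne'⟩
  have hχ' : χ ^ m = 1 := hχ
  have hmsq : (m : ZMod (k * m)) * (m : ZMod (k * m)) = 0 := zmod_m_sq k m hkm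
  have hkmz : (k : ZMod (k * m)) * (m : ZMod (k * m)) = 0 := by
    have h : ((k * m : ℕ) : ZMod (k * m)) = 0 := ZMod.natCast_self (k * m)
    push_cast at h; rw [← h]
  -- pointwise identity
  have key : ∀ x : ZMod (k * m),
      (χ ^ a1) x * (χ ^ a2) (x + (m : ZMod (k * m))) *
      (χ ^ a3) (x + 2 * (m : ZMod (k * m))) * (χ ^ a4) (x + 3 * (m : ZMod (k * m)))
      = (1 : MulChar (ZMod (k * m)) ℂ) x := by
    intro x
    by_cases hx : IsUnit x
    · obtain ⟨u, rfl⟩ := hx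
      set s : ZMod (k * m) := ((u⁻¹ : (ZMod (k * m))ˣ) : ZMod (k * m)) with hs
      have hus : (u : ZMod (k * m)) * s = 1 := u.mul_inv
      have hms2 : (m : ZMod (k * m)) * s * ((m : ZMod (k * m)) * s) = 0 := by
        calc (m : ZMod (k * m)) * s * ((m : ZMod (k * m)) * s)
            = ((m : ZMod (k * m)) * (m : ZMod (k * m))) * (s * s) := by ring
          _ = 0 := by rw [hmsq, zero_mul]
      set v : (ZMod (k * m))ˣ :=
        ⟨1 + (m : ZMod (k * m)) * s, 1 - (m : ZMod (k * m)) * s,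
          by linear_combination -hms2, by linear_combination -hms2⟩ with hv
      have hvval : ((v : (ZMod (k * m))ˣ) : ZMod (k * m)) = 1 + (m : ZMod (k * m)) * s := rfl
      have hvj : ∀ j : ℕ,
          ((v ^ j : (ZMod (k * m))ˣ) : ZMod (k * m)) = 1 + (j : ZMod (k * m)) * ((m : ZMod (k * m)) * s) := by
        intro j
        induction j with
        | zero => simp
        | succ n ihn =>
          rw [pow_succ, Units.val_mul, ihn, hvval]
          push_cast
          linear_combination (n : ZMod (k * m)) * hms2
      have hvk : v ^ k = 1 := by
        ext
        rw [hvj k, Units.val_one]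
        calc 1 + (k : ZMod (k * m)) * ((m : ZMod (k * m)) * s)
            = 1 + ((k : ZMod (k * m)) * (m : ZMod (k * m))) * s := by ring
          _ = 1 := by rw [hkmz]; ring
      have h2 : ((u : ZMod (k * m)) + (m : ZMod (k * m))) = ((u * v : (ZMod (k * m))ˣ) : ZMod (k * m)) := by
        rw [Units.val_mul, hvval]
        linear_combination (-(m : ZMod (k * m))) * hus
      have h3 : ((u : ZMod (k * m)) + 2 * (m : ZMod (k * m))) = ((u * v ^ 2 : (ZMod (k * m))ˣ) : ZMod (k * m)) := by
        rw [Units.val_mul, hvj 2]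
        push_cast
        linear_combination (-2 * (m : ZMod (k * m))) * hus
      have h4 : ((u : ZMod (k * m)) + 3 * (m : ZMod (k * m))) = ((u * v ^ 3 : (ZMod (k * m))ˣ) : ZMod (k * m)) := by
        rw [Units.val_mul, hvj 3]
        push_cast
        linear_combination (-3 * (m : ZMod (k * m))) * hus
      obtain ⟨Ψ, hΨ⟩ : ∃ Ψ : MulChar (ZMod (k * m)) ℂ ≃* ((ZMod (k * m))ˣ →* ℂˣ),
          Ψ = MulChar.mulEquivToUnitHom := ⟨_, rfl⟩
      have happly : ∀ (a : ℤ) (w : (ZMod (k * m))ˣ),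
          (χ ^ a) (w : ZMod (k * m)) = ((Ψ χ w : ℂˣ) : ℂ) ^ a := by
        intro a w
        have e1 : (χ ^ a) (w : ZMod (k * m)) = ((MulChar.equivToUnitHom (χ ^ a)) w : ℂ) :=
          (MulChar.coe_equivToUnitHom _ w).symm
        have e2 : (MulChar.equivToUnitHom (χ ^ a)) w = (Ψ (χ ^ a)) w := by rw [hΨ]; rfl
        rw [e1, e2, map_zpow]
        rw [show ((Ψ χ) ^ a) w = (Ψ χ w) ^ a from rfl]
        rw [Units.val_zpow_eq_zpow_val]
      obtain ⟨A, hA⟩ : ∃ A : ℂˣ, A = Ψ χ u := ⟨_, rfl⟩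
      obtain ⟨B, hB⟩ : ∃ B : ℂˣ, B = Ψ χ v := ⟨_, rfl⟩
      have hAm : A ^ (m : ℤ) = 1 := by
        have e : Ψ (χ ^ m) = 1 := by rw [hχ', map_one]
        have e' : (Ψ χ) ^ m = 1 := (map_pow Ψ χ m).symm.trans e
        have e'' := congrArg (fun f => f u) e'
        simp only [MonoidHom.pow_apply, MonoidHom.one_apply] at e''
        rw [zpow_natCast, hA, e'']
      have hBk : B ^ (k : ℤ) = 1 := by
        rw [zpow_natCast, hB, ← map_pow, hvk, map_one]
      have key2 : A ^ a1 * (A * B) ^ a2 * (A * B ^ 2) ^ a3 * (A * B ^ 3) ^ a4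
          = A ^ (a1 + a2 + a3 + a4) * B ^ (a2 + 2 * a3 + 3 * a4) := by
        rw [mul_zpow, mul_zpow, mul_zpow, ← zpow_natCast B 2, ← zpow_natCast B 3,
          ← zpow_mul, ← zpow_mul, zpow_add, zpow_add, zpow_add, zpow_add, zpow_add]
        push_cast
        simp only [mul_comm, mul_left_comm, mul_assoc]
      have hA1 : A ^ (a1 + a2 + a3 + a4) = 1 := by
        obtain ⟨q, hq⟩ := hsum
        rw [hq, zpow_mul, hAm, one_zpow]
      have hB1 : B ^ (a2 + 2 * a3 + 3 * a4) = 1 := by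
        obtain ⟨q, hq⟩ := hsum'
        rw [hq, zpow_mul, hBk, one_zpow]
      have hprod : (A ^ a1 * (A * B) ^ a2 * (A * B ^ 2) ^ a3 * (A * B ^ 3) ^ a4 : ℂˣ) = 1 := by
        rw [key2, hA1, hB1, mul_one]
      have hcast : ((A ^ a1 * (A * B) ^ a2 * (A * B ^ 2) ^ a3 * (A * B ^ 3) ^ a4 : ℂˣ) : ℂ)
          = ((A : ℂˣ) : ℂ) ^ a1 * ((A * B : ℂˣ) : ℂ) ^ a2 * ((A * B ^ 2 : ℂˣ) : ℂ) ^ a3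
            * ((A * B ^ 3 : ℂˣ) : ℂ) ^ a4 := by
        simp [Units.val_zpow_eq_zpow_val]
      rw [happly a1 u, h2, happly a2 (u * v), h3, happly a3 (u * v ^ 2), h4,
        happly a4 (u * v ^ 3), MulChar.one_apply_coe,
        map_mul, map_mul, map_mul, map_pow, map_pow, ← hA, ← hB, ← hcast, hprod, Units.val_one]
    · rw [MulChar.map_nonunit _ hx, MulChar.map_nonunit (1 : MulChar (ZMod (k * m)) ℂ) hx]
      ring
  -- convert sum over range to sum over ZMod (k * m)
  have hrange : ∑ t ∈ Finset.range (k * m),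
      (χ ^ a1) (t : ZMod (k * m)) * (χ ^ a2) ((t : ZMod (k * m)) + (m : ZMod (k * m))) *
      (χ ^ a3) ((t : ZMod (k * m)) + 2 * (m : ZMod (k * m))) * (χ ^ a4) ((t : ZMod (k * m)) + 3 * (m : ZMod (k * m)))
      = ∑ x : ZMod (k * m),
        (χ ^ a1) x * (χ ^ a2) (x + (m : ZMod (k * m))) *
        (χ ^ a3) (x + 2 * (m : ZMod (k * m))) * (χ ^ a4) (x + 3 * (m : ZMod (k * m))) := by
    refine Finset.sum_nbij' (fun t : ℕ => (t : ZMod (k * m))) (fun x : ZMod (k * m) => x.val)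
      ?_ ?_ ?_ ?_ ?_
    · intro a _; exact Finset.mem_univ _
    · intro x _; exact Finset.mem_range.mpr x.val_lt
    · intro a ha; exact ZMod.val_cast_of_lt (Finset.mem_range.mp ha)
    · intro x _; exact ZMod.natCast_rightInverse x
    · intro a _; rfl
  rw [hrange, Finset.sum_congr rfl (fun x _ => key x), MulChar.sum_one_eq_card_units,
    ZMod.card_units_eq_totient (k * m)]
  have htot : (k * m).totient = k * m.totient := by
    apply totient_mul_aux
    intro p hp hpk
    exact (hp.dvd_of_dvd_pow (n := 1) (by simpa using hpk.trans hkm) : p ∣ m)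
  rw [htot]
  push_cast
  ring
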